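/- Let σ be a convex polyhedral cone in a finite-dimensional real vector space N, let τ be a one-dimensional face of σ, and let α ∈ N* be a linear functional such that α is negative on τ∖{0} and nonnegative on every one-dimensional face τ′ ≠ τ of σ. If η is a face of σ with η ⊆ ker α, then τ + η is a face of σ. -/

import Mathlib

/-!
Background interface for the birational geometry of (complex) projective
varieties, used to state results of the paper
"Fano 4-folds with Picard number at least 7" (C. Casagrande).

Mathlib does not yet provide the notions of contraction, blow-up, canonical
class, Mori cones, etc.  These notions are therefore encoded as the data of an
abstract geometry `VarGeom K` over a base field `K`; compound notions
(Fano 4-folds, del Pezzo surfaces, elementary/small/divisorial contractions,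
rational contractions, types of fixed prime divisors, faces of the effective
cone, ...) are honestly *defined* in terms of these primitives, following the
definitions in the paper.
-/

open scoped Pointwise

noncomputable section

/-- The convex cone generated by a set of vectors. -/
def coneGen {V : Type} [AddCommGroup V] [Module ℝ V] (S : Set V) : Set V :=
  {x | ∃ (n : ℕ) (c : Fin n → ℝ) (v : Fin n → V),
    (∀ i, 0 ≤ c i) ∧ (∀ i, v i ∈ S) ∧ x = ∑ i, c i • v i}

/-- A subset of a real vector space is a convex cone (containing the origin). -/
def IsConvexConeSet {V : Type} [AddCommGroup V] [Module ℝ V] (C : Set V) : Prop :=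
  (0 : V) ∈ C ∧ (∀ x ∈ C, ∀ y ∈ C, x + y ∈ C) ∧ ∀ t : ℝ, 0 ≤ t → ∀ x ∈ C, t • x ∈ C

/-- `F` is a face of the convex cone `C`: a subcone such that whenever a sum of
two elements of `C` lies in `F`, both elements lie in `F`. -/
def IsFaceOf {V : Type} [AddCommGroup V] [Module ℝ V] (C F : Set V) : Prop :=
  IsConvexConeSet F ∧ F ⊆ C ∧ ∀ x ∈ C, ∀ y ∈ C, x + y ∈ F → x ∈ F ∧ y ∈ F

/-- A convex polyhedral cone: the cone generated by finitely many vectors. -/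
def IsPolyhedralCone {V : Type} [AddCommGroup V] [Module ℝ V] (σ : Set V) : Prop :=
  ∃ S : Finset V, σ = coneGen (S : Set V)

/-- The dimension of (the linear span of) a subset of a real vector space. -/
def coneDim {V : Type} [AddCommGroup V] [Module ℝ V] (F : Set V) : ℕ :=
  Module.finrank ℝ (Submodule.span ℝ F)

/-- Abstract interface for the geometry of algebraic varieties over the field `K`.
The fields are the primitive notions; everything else is defined from them. -/
structure VarGeom (K : Type) [Field K] : Type 1 where
  /-- the collection of varieties over `K` -/
  Var : Type
  /-- the points of a variety -/
  Pt : Var → Type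
  /-- the Zariski topology on the points -/
  top : ∀ X, TopologicalSpace (Pt X)
  /-- morphisms of varieties -/
  Hom : Var → Var → Type
  /-- the underlying function of a morphism -/
  homFun : ∀ {X Y}, Hom X Y → Pt X → Pt Y
  /-- composition of morphisms -/
  homComp : ∀ {X Y Z}, Hom Y Z → Hom X Y → Hom X Z
  /-- a morphism is an isomorphism -/
  IsIsoHom : ∀ {X Y}, Hom X Y → Prop
  /-- rational maps of varieties -/
  RatMap : Var → Var → Type
  /-- a morphism as a rational map -/
  homToRat : ∀ {X Y}, Hom X Y → RatMap X Y
  /-- composition of rational maps -/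
  ratComp : ∀ {X Y Z}, RatMap Y Z → RatMap X Y → RatMap X Z
  /-- the domain of definition of a rational map -/
  ratDomain : ∀ {X Y}, RatMap X Y → Set (Pt X)
  /-- strict transform of a closed subset under a birational map -/
  ratTransform : ∀ {X Y}, RatMap X Y → Set (Pt X) → Set (Pt Y)
  /-- strict (proper) transform of a closed subset of the target of a
  birational morphism -/
  strictTransform : ∀ {X Y}, Hom X Y → Set (Pt Y) → Set (Pt X)
  /-- dimension of a variety -/
  dim : Var → ℕ
  /-- the Picard number ρ -/
  picardNumber : Var → ℕ
  /-- dimension of a closed subset -/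
  setDim : ∀ {X}, Set (Pt X) → ℕ
  /-- the variety is smooth at a point -/
  IsSmoothPt : ∀ {X}, Pt X → Prop
  /-- a closed subvariety is smooth -/
  IsSmoothSub : ∀ {X}, Set (Pt X) → Prop
  IsProjective : Var → Prop
  IsQuasiProjective : Var → Prop
  IsNormal : Var → Prop
  IsQFactorial : Var → Prop
  /-- the anticanonical divisor −K is ample -/
  IsFano : Var → Prop
  /-- −K is nef and big -/
  IsWeakFano : Var → Prop
  IsMoriDreamSpace : Var → Prop
  IsLocallyFactorial : Var → Prop
  HasTerminalSingularities : Var → Prop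
  /-- the self-intersection K² of the canonical divisor of a surface -/
  Ksq : Var → ℤ
  /-- h⁰(X, −K_X) -/
  h0antiK : Var → ℕ
  /-- χ(X, O_X(−K_X)) -/
  chiAntiK : Var → ℤ
  /-- χ(S, O_Y(−K_Y)|_S) for a closed subvariety S ⊆ Y -/
  chiAntiKres : ∀ {Y}, Set (Pt Y) → ℤ
  /-- the product of two varieties -/
  prod : Var → Var → Var
  /-- isomorphism of varieties -/
  Isomorphic : Var → Var → Prop
  /-- projective space ℙⁿ -/
  Proj : ℕ → Var
  /-- a closed subvariety is normal -/
  IsNormalSub : ∀ {X}, Set (Pt X) → Prop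
  /-- the closed subvariety (with its reduced structure) is isomorphic to the
  given variety -/
  SubIsomorphicTo : ∀ {X}, Set (Pt X) → Var → Prop
  /-- `K_S = K_Y|_S` for a closed subvariety `S ⊆ Y` -/
  KEqualsRestriction : ∀ {Y}, Set (Pt Y) → Prop
  /-- a prime divisor `D` with `D = Bs|mD|` for all `m > 0` -/
  IsFixedPrimeDivisor : ∀ {X}, Set (Pt X) → Prop
  /-- a projective surjective morphism with connected fibers between normal
  varieties -/
  IsContraction : ∀ {X Y}, Hom X Y → Prop
  /-- −mK is Cartier and relatively ample for some m > 0 -/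
  IsKNegative : ∀ {X Y}, Hom X Y → Prop
  IsBirational : ∀ {X Y}, Hom X Y → Prop
  /-- the exceptional locus of a birational morphism -/
  exc : ∀ {X Y}, Hom X Y → Set (Pt X)
  /-- `f : X → Y` is the blow-up of `Y` along the given reduced closed
  subscheme -/
  IsBlowupAlong : ∀ {X Y}, Hom X Y → Set (Pt Y) → Prop
  /-- small ℚ-factorial modification: a birational map which is an isomorphism
  in codimension one (equivalently, for Mori dream spaces, a finite sequence
  of flips) -/
  IsSQM : ∀ {X Y}, RatMap X Y → Prop
  /-- a conic bundle -/
  IsConicBundle : ∀ {X Y}, Hom X Y → Prop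
  /-- a finite set of points in general position -/
  IsGeneralPoints : ∀ {X}, Set (Pt X) → Prop
  /-- the variety is (isomorphic to) a cubic hypersurface in ℙ⁵ -/
  IsCubicFourfoldInP5 : Var → Prop
  /-- the closed subset is a plane (a linear ℙ² of the ambient projective
  space) -/
  IsPlaneIn : ∀ {Z}, Set (Pt Z) → Prop
  /-- an ordinary double point: an isolated singularity locally analytically
  isomorphic to the vertex of the cone over a smooth quadric -/
  IsODP : ∀ {X}, Pt X → Prop
  /-- a cubic rational normal scroll (surface in ℙ⁴) -/
  IsCubicScrollIn : ∀ {X}, Set (Pt X) → Prop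
  /-- a cone over a twisted cubic (surface in ℙ⁴) -/
  IsConeOverTwistedCubicIn : ∀ {X}, Set (Pt X) → Prop
  /-- an irreducible 3-dimensional quadric Q with normal bundle O_Q(−1) -/
  IsQuadric3foldWithNormalOMinus1 : ∀ {X}, Set (Pt X) → Prop
  /-- an isolated, locally factorial, terminal singular point -/
  IsIsolatedLocallyFactorialTerminalPt : ∀ {X}, Pt X → Prop
  /-- two closed subvarieties intersect transversally at the given point -/
  IntersectTransversallyAt : ∀ {X}, Set (Pt X) → Set (Pt X) → Pt X → Prop
  /-- the general fiber of a contraction of fiber type, as an abstract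
  variety -/
  generalFiber : ∀ {X Y}, Hom X Y → Var
  /-- the Picard number of the generic fiber X_η over the field K(Y) -/
  genericFiberPicard : ∀ {X Y}, Hom X Y → ℕ
  /-- N(Z,X) := ι_*(N₁(Z)) ⊆ N₁(X), where N₁(X) is identified with ℝ^ρ -/
  NsubSpan : ∀ {X}, Set (Pt X) → Submodule ℝ (Fin (picardNumber X) → ℝ)
  /-- the numerical class of a divisor in N¹(X) ≅ ℝ^ρ -/
  divClass : ∀ {X}, Set (Pt X) → (Fin (picardNumber X) → ℝ)
  /-- the perfect pairing N¹(X) × N₁(X) → ℝ -/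
  pairing : ∀ X, (Fin (picardNumber X) → ℝ) →ₗ[ℝ] (Fin (picardNumber X) → ℝ) →ₗ[ℝ] ℝ
  /-- the cone of effective divisor classes in N¹(X) -/
  EffCone : ∀ X, Set (Fin (picardNumber X) → ℝ)
  /-- the cone of movable divisor classes in N¹(X) -/
  MovCone : ∀ X, Set (Fin (picardNumber X) → ℝ)
  /-- the Mori cone NE(X) ⊆ N₁(X) -/
  NECone : ∀ X, Set (Fin (picardNumber X) → ℝ)
  /-- pushforward f_* : N₁(X) → N₁(Y) -/
  pushN1 : ∀ {X Y}, Hom X Y → (Fin (picardNumber X) → ℝ) →ₗ[ℝ] (Fin (picardNumber Y) → ℝ)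
  /-- the locus of an extremal ray: the union of the curves with class in it -/
  raysLocus : ∀ {X}, Set (Fin (picardNumber X) → ℝ) → Set (Pt X)
  /-- the invariant d_f = ρ_X − dim τ_f of a rational contraction of fiber
  type, where τ_f is the minimal face of Eff(X) containing f^*(Eff Y) -/
  df : ∀ {X Y}, RatMap X Y → ℕ

namespace VarGeom

variable {K : Type} [Field K] (G : VarGeom K)

/-- N¹(X) ≅ N₁(X) ≅ ℝ^ρ. -/
abbrev Nvec (X : G.Var) : Type := Fin (G.picardNumber X) → ℝ

/-- A variety is irreducible. -/
def IsIrreducibleVar (X : G.Var) : Prop :=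
  letI := G.top X
  IsIrreducible (Set.univ : Set (G.Pt X))

/-- A variety is smooth. -/
def IsSmooth (X : G.Var) : Prop := ∀ p : G.Pt X, G.IsSmoothPt p

/-- The smooth locus of a variety. -/
def smoothLocus (X : G.Var) : Set (G.Pt X) := {p | G.IsSmoothPt p}

/-- A (smooth, complex) Fano 4-fold: a smooth projective 4-dimensional variety
with ample anticanonical divisor. -/
def IsFanoFourfold (X : G.Var) : Prop :=
  G.IsIrreducibleVar X ∧ G.IsSmooth X ∧ G.IsProjective X ∧ G.dim X = 4 ∧ G.IsFano X

/-- A del Pezzo surface: a smooth projective surface with ample anticanonical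
divisor. -/
def IsDelPezzoSurface (X : G.Var) : Prop :=
  G.IsIrreducibleVar X ∧ G.IsSmooth X ∧ G.IsProjective X ∧ G.dim X = 2 ∧ G.IsFano X

/-- X is isomorphic to a product of two (smooth projective) surfaces. -/
def IsProductOfTwoSurfaces (X : G.Var) : Prop :=
  ∃ S T : G.Var, G.IsSmooth S ∧ G.IsProjective S ∧ G.dim S = 2 ∧
    G.IsSmooth T ∧ G.IsProjective T ∧ G.dim T = 2 ∧ G.Isomorphic X (G.prod S T)

/-- A closed irreducible subvariety. -/
def IsSubvariety {X : G.Var} (S : Set (G.Pt X)) : Prop :=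
  letI := G.top X
  IsClosed S ∧ IsIrreducible S

/-- A prime divisor: a closed irreducible subvariety of codimension one. -/
def IsPrimeDivisorIn {X : G.Var} (D : Set (G.Pt X)) : Prop :=
  G.IsSubvariety D ∧ G.setDim D + 1 = G.dim X

/-- An elementary contraction: ρ_X − ρ_Y = 1. -/
def IsElementary {X Y : G.Var} (f : G.Hom X Y) : Prop :=
  G.IsContraction f ∧ G.picardNumber X = G.picardNumber Y + 1

/-- A morphism of fiber type: dim Y < dim X. -/
def IsOfFiberType {X Y : G.Var} (_f : G.Hom X Y) : Prop := G.dim Y < G.dim X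

/-- A small contraction: birational with exceptional locus of codim ≥ 2. -/
def IsSmallContraction {X Y : G.Var} (f : G.Hom X Y) : Prop :=
  G.IsContraction f ∧ G.IsBirational f ∧ G.setDim (G.exc f) + 2 ≤ G.dim X

/-- A divisorial contraction: birational with exceptional locus a prime
divisor. -/
def IsDivisorialContraction {X Y : G.Var} (f : G.Hom X Y) : Prop :=
  G.IsContraction f ∧ G.IsBirational f ∧ G.IsPrimeDivisorIn (G.exc f)

/-- X has no small elementary contraction. -/
def HasNoSmallElementaryContraction (X : G.Var) : Prop :=
  ∀ (Y : G.Var) (f : G.Hom X Y), ¬ (G.IsElementary f ∧ G.IsSmallContraction f)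

/-- A contraction of type (3,2): divisorial with dim Exc(f) = 3 and
dim f(Exc f) = 2. -/
def IsType32 {X Y : G.Var} (f : G.Hom X Y) : Prop :=
  G.IsDivisorialContraction f ∧ G.setDim (G.exc f) = 3 ∧
    G.setDim (G.homFun f '' G.exc f) = 2

/-- A rational contraction: a rational map factoring as an SQM followed by a
contraction. -/
def IsRationalContraction {X Y : G.Var} (f : G.RatMap X Y) : Prop :=
  ∃ (X' : G.Var) (φ : G.RatMap X X') (g : G.Hom X' Y),
    G.IsSQM φ ∧ G.IsContraction g ∧ f = G.ratComp (G.homToRat g) φ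

/-- An elementary rational contraction: ρ_X − ρ_Y = 1. -/
def IsElementaryRatContraction {X Y : G.Var} (f : G.RatMap X Y) : Prop :=
  G.IsRationalContraction f ∧ G.picardNumber X = G.picardNumber Y + 1

/-- A rational contraction of fiber type. -/
def IsRatContractionOfFiberType {X Y : G.Var} (f : G.RatMap X Y) : Prop :=
  G.IsRationalContraction f ∧ G.dim Y < G.dim X

/-- X has an elementary rational contraction onto a 3-fold. -/
def HasElemRatContractionOnto3fold (X : G.Var) : Prop :=
  ∃ (Y : G.Var) (f : G.RatMap X Y), G.dim Y = 3 ∧ G.IsElementaryRatContraction f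

/-- X has a rational contraction onto a 3-fold. -/
def HasRatContractionOnto3fold (X : G.Var) : Prop :=
  ∃ (Y : G.Var) (f : G.RatMap X Y), G.dim Y = 3 ∧ G.IsRationalContraction f

/-- A special contraction of fiber type: the target is ℚ-factorial and every
prime divisor of the source has image of codimension ≤ 1. -/
def IsSpecialContraction {X Y : G.Var} (f : G.Hom X Y) : Prop :=
  G.IsContraction f ∧ G.IsOfFiberType f ∧ G.IsQFactorial Y ∧
    ∀ D : Set (G.Pt X), G.IsPrimeDivisorIn D → G.dim Y ≤ G.setDim (G.homFun f '' D) + 1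

/-- A special rational contraction of fiber type (some resolution is special). -/
def IsSpecialRatContraction {X Y : G.Var} (f : G.RatMap X Y) : Prop :=
  ∃ (X' : G.Var) (φ : G.RatMap X X') (g : G.Hom X' Y),
    G.IsSQM φ ∧ G.IsSpecialContraction g ∧ f = G.ratComp (G.homToRat g) φ

/-- A quasi-elementary contraction of fiber type:
dim N(F,X) = ρ_X − ρ_Y for every fiber F. -/
def IsQuasiElementaryContraction {X Y : G.Var} (f : G.Hom X Y) : Prop :=
  G.IsContraction f ∧ G.IsOfFiberType f ∧
    ∀ y : G.Pt Y,
      Module.finrank ℝ (G.NsubSpan (G.homFun f ⁻¹' {y})) + G.picardNumber Y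
        = G.picardNumber X

/-- A quasi-elementary rational contraction (some resolution is
quasi-elementary). -/
def IsQuasiElemRatContraction {X Y : G.Var} (f : G.RatMap X Y) : Prop :=
  ∃ (X' : G.Var) (φ : G.RatMap X X') (g : G.Hom X' Y),
    G.IsSQM φ ∧ G.IsQuasiElementaryContraction g ∧ f = G.ratComp (G.homToRat g) φ

/-- A rational map is regular (a morphism). -/
def IsRegular {X Y : G.Var} (f : G.RatMap X Y) : Prop :=
  ∃ h : G.Hom X Y, f = G.homToRat h

/-- An equidimensional morphism: all fibers have dimension dim X − dim Y. -/
def IsEquidimensional {X Y : G.Var} (f : G.Hom X Y) : Prop :=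
  ∀ y : G.Pt Y, G.setDim (G.homFun f ⁻¹' {y}) + G.dim Y = G.dim X

/-- `F` is a general fiber of `f`: the fiber over a point of a nonempty open
subset of the target on which `y ↦ N(f⁻¹(y), X)` is constant. -/
def IsGeneralFiberSet {X Y : G.Var} (f : G.Hom X Y) (F : Set (G.Pt X)) : Prop :=
  letI := G.top Y
  ∃ U : Set (G.Pt Y), IsOpen U ∧ U.Nonempty ∧
    (∀ y ∈ U, ∀ y' ∈ U, G.NsubSpan (G.homFun f ⁻¹' {y}) = G.NsubSpan (G.homFun f ⁻¹' {y'})) ∧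
    ∃ y ∈ U, F = G.homFun f ⁻¹' {y}

/-- f is the blow-up of a smooth point. -/
def IsBlowupOfSmoothPoint {X Y : G.Var} (f : G.Hom X Y) : Prop :=
  ∃ p : G.Pt Y, G.IsSmoothPt p ∧ G.IsBlowupAlong f {p}

/-- f is the blow-up of a smooth irreducible curve contained in the smooth
locus of the target. -/
def IsBlowupOfSmoothCurve {X Y : G.Var} (f : G.Hom X Y) : Prop :=
  ∃ C : Set (G.Pt Y), G.IsSubvariety C ∧ G.IsSmoothSub C ∧ G.setDim C = 1 ∧
    C ⊆ G.smoothLocus Y ∧ G.IsBlowupAlong f C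

/-- f is of type (3,0)^Q: Exc(f) is an irreducible 3-dimensional quadric with
normal bundle O(−1), contracted to an isolated locally factorial terminal
point. -/
def IsType30Q {X Y : G.Var} (f : G.Hom X Y) : Prop :=
  G.IsQuadric3foldWithNormalOMinus1 (G.exc f) ∧
    ∃ p : G.Pt Y, G.homFun f '' G.exc f = {p} ∧
      G.IsIsolatedLocallyFactorialTerminalPt p

/-- f is of type (3,2)^sm: the blow-up of a smooth irreducible surface
contained in the smooth locus of the target. -/
def IsType32sm {X Y : G.Var} (f : G.Hom X Y) : Prop :=
  ∃ S : Set (G.Pt Y), G.IsSubvariety S ∧ G.IsSmoothSub S ∧ G.setDim S = 2 ∧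
    S ⊆ G.smoothLocus Y ∧ G.IsBlowupAlong f S

/-- A fixed prime divisor of type (3,0)^sm: there are an SQM ξ : X ⇢ X' and an
elementary divisorial contraction σ : X' → Y with exceptional divisor the
transform of D, with Y Fano and σ the blow-up of a smooth point. -/
def IsFixedPrimeDivisorOfType30sm {X : G.Var} (D : Set (G.Pt X)) : Prop :=
  G.IsFixedPrimeDivisor D ∧
  ∃ (X' Y : G.Var) (ξ : G.RatMap X X') (σ : G.Hom X' Y),
    G.IsSQM ξ ∧ G.IsElementary σ ∧ G.IsDivisorialContraction σ ∧
    G.exc σ = G.ratTransform ξ D ∧ G.IsFano Y ∧ G.IsBlowupOfSmoothPoint σ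

/-- A fixed prime divisor of type (3,1)^sm (σ is the blow-up of a smooth
irreducible curve in the smooth locus). -/
def IsFixedPrimeDivisorOfType31sm {X : G.Var} (D : Set (G.Pt X)) : Prop :=
  G.IsFixedPrimeDivisor D ∧
  ∃ (X' Y : G.Var) (ξ : G.RatMap X X') (σ : G.Hom X' Y),
    G.IsSQM ξ ∧ G.IsElementary σ ∧ G.IsDivisorialContraction σ ∧
    G.exc σ = G.ratTransform ξ D ∧ G.IsFano Y ∧ G.IsBlowupOfSmoothCurve σ

/-- A fixed prime divisor of type (3,0)^Q. -/
def IsFixedPrimeDivisorOfType30Q {X : G.Var} (D : Set (G.Pt X)) : Prop :=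
  G.IsFixedPrimeDivisor D ∧
  ∃ (X' Y : G.Var) (ξ : G.RatMap X X') (σ : G.Hom X' Y),
    G.IsSQM ξ ∧ G.IsElementary σ ∧ G.IsDivisorialContraction σ ∧
    G.exc σ = G.ratTransform ξ D ∧ G.IsFano Y ∧ G.IsType30Q σ

/-- A fixed prime divisor of type (3,2): here the elementary divisorial
contraction is defined on X itself, with dim σ(Exc σ) = 2. -/
def IsFixedPrimeDivisorOfType32 {X : G.Var} (D : Set (G.Pt X)) : Prop :=
  G.IsFixedPrimeDivisor D ∧
  ∃ (Y : G.Var) (σ : G.Hom X Y),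
    G.IsElementary σ ∧ G.IsType32 σ ∧ G.exc σ = D ∧ G.IsFano Y

/-- A movable face of Eff(X): a face meeting Mov(X) outside the origin. -/
def IsMovableFace (X : G.Var) (τ : Set (Fin (G.picardNumber X) → ℝ)) : Prop :=
  IsFaceOf (G.EffCone X) τ ∧ ∃ v ∈ τ ∩ G.MovCone X, v ≠ 0

/-- A fixed face of Eff(X): a face meeting Mov(X) only in the origin. -/
def IsFixedFace (X : G.Var) (τ : Set (Fin (G.picardNumber X) → ℝ)) : Prop :=
  IsFaceOf (G.EffCone X) τ ∧ τ ∩ G.MovCone X ⊆ {0}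

/-- Two fixed prime divisors are adjacent if the cone spanned by their classes
is a fixed face of Eff(X). -/
def AdjacentFixedDivisors {X : G.Var} (D E : Set (G.Pt X)) : Prop :=
  G.IsFixedFace X (coneGen {G.divClass D, G.divClass E})

/-- The relative Mori cone NE(f) = ker f_* ∩ NE(X). -/
def NEof {X Y : G.Var} (f : G.Hom X Y) : Set (Fin (G.picardNumber X) → ℝ) :=
  {v | v ∈ G.NECone X ∧ G.pushN1 f v = 0}

/-- An extremal ray of NE(X): a one-dimensional face. -/
def IsExtremalRay (X : G.Var) (R : Set (Fin (G.picardNumber X) → ℝ)) : Prop :=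
  IsFaceOf (G.NECone X) R ∧ coneDim R = 1

/-- `f : X → Z` is the composition of the blow-ups of the members of the list,
blowing up the first subvariety and successively the (strict) transforms of
the other ones. -/
inductive IsIteratedBlowupHom : {X Z : G.Var} → G.Hom X Z → List (Set (G.Pt Z)) → Prop
  | nil {X Z : G.Var} (f : G.Hom X Z) : G.IsIsoHom f → IsIteratedBlowupHom f []
  | cons {X Z Z' : G.Var} (f : G.Hom X Z) (A : Set (G.Pt Z)) (L : List (Set (G.Pt Z)))
      (g : G.Hom Z' Z) (h : G.Hom X Z') :
      G.IsBlowupAlong g A → f = G.homComp g h →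
      IsIteratedBlowupHom h (L.map (G.strictTransform g)) →
      IsIteratedBlowupHom f (A :: L)

/-- The conclusion of Theorem `brasile` (a): `f` factors through a 3-fold via a
special rational contraction followed by a contraction of fiber type. -/
def FactorsThrough3foldSpecial {X Y : G.Var} (f : G.RatMap X Y) : Prop :=
  ∃ (Z : G.Var) (g : G.RatMap X Z) (h : G.Hom Z Y),
    G.dim Z = 3 ∧ G.IsSpecialRatContraction g ∧ G.IsContraction h ∧
    G.IsOfFiberType h ∧ f = G.ratComp (G.homToRat h) g

/-- `f` is regular with general fiber a del Pezzo surface of degree one. -/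
def RegularWithDelPezzoDeg1Fiber {X Y : G.Var} (f : G.RatMap X Y) : Prop :=
  ∃ h : G.Hom X Y, f = G.homToRat h ∧
    G.IsDelPezzoSurface (G.generalFiber h) ∧ G.Ksq (G.generalFiber h) = 1

/-- Fano variety with at most isolated ordinary double points. -/
def IsFanoWithODPs (Z : G.Var) : Prop :=
  G.IsIrreducibleVar Z ∧ G.IsNormal Z ∧ G.IsProjective Z ∧ G.IsFano Z ∧
    ∀ p : G.Pt Z, ¬ G.IsSmoothPt p → G.IsODP p

/-- A closed subvariety which is a smooth del Pezzo surface. -/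
def IsSmoothDelPezzoSub {Y : G.Var} (S : Set (G.Pt Y)) : Prop :=
  G.IsSubvariety S ∧ G.IsSmoothSub S ∧ G.setDim S = 2 ∧
    ∃ T : G.Var, G.IsDelPezzoSurface T ∧ G.SubIsomorphicTo S T

/-- The orthogonal complement of a subspace of N₁(X) inside N¹(X), with respect
to the pairing. -/
def perp (X : G.Var) (M : Submodule ℝ (Fin (G.picardNumber X) → ℝ)) :
    Submodule ℝ (Fin (G.picardNumber X) → ℝ) where
  carrier := {φ | ∀ v ∈ M, G.pairing X φ v = 0}
  add_mem' := by
    intro a b ha hb v hv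
    have h1 := ha v hv
    have h2 := hb v hv
    rw [map_add]
    simp [LinearMap.add_apply, h1, h2]
  zero_mem' := by
    intro v hv
    simp
  smul_mem' := by
    intro c a ha v hv
    have h1 := ha v hv
    rw [map_smul]
    simp [LinearMap.smul_apply, h1]

end VarGeom

section StmtAux

variable {V : Type} [AddCommGroup V] [Module ℝ V]

lemma StmtAux.mem_coneGen_of_mem {S : Set V} {x : V} (hx : x ∈ S) : x ∈ coneGen S :=
  ⟨1, fun _ => 1, fun _ => x, fun _ => zero_le_one, fun _ => hx, by simp⟩

lemma StmtAux.coneGen_zero_mem (S : Set V) : (0 : V) ∈ coneGen S :=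
  ⟨0, fun i => i.elim0, fun i => i.elim0, fun i => i.elim0, fun i => i.elim0, by simp⟩

lemma StmtAux.coneGen_add_mem {S : Set V} {x y : V} (hx : x ∈ coneGen S)
    (hy : y ∈ coneGen S) : x + y ∈ coneGen S := by
  obtain ⟨n, c, v, hc, hv, rfl⟩ := hx
  obtain ⟨m, d, w, hd, hw, rfl⟩ := hy
  refine ⟨n + m, Fin.append c d, Fin.append v w, ?_, ?_, ?_⟩
  · intro i
    refine i.addCases (fun j => ?_) (fun j => ?_)
    · simpa [Fin.append_left] using hc j
    · simpa [Fin.append_right] using hd j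
  · intro i
    refine i.addCases (fun j => ?_) (fun j => ?_)
    · simpa [Fin.append_left] using hv j
    · simpa [Fin.append_right] using hw j
  · rw [Fin.sum_univ_add]
    simp [Fin.append_left, Fin.append_right]

lemma StmtAux.coneGen_smul_mem {S : Set V} {t : ℝ} (ht : 0 ≤ t) {x : V}
    (hx : x ∈ coneGen S) : t • x ∈ coneGen S := by
  obtain ⟨n, c, v, hc, hv, rfl⟩ := hx
  exact ⟨n, fun i => t * c i, v, fun i => mul_nonneg ht (hc i), hv, by
    rw [Finset.smul_sum]; simp [smul_smul]⟩

lemma StmtAux.isConvexConeSet_coneGen (S : Set V) : IsConvexConeSet (coneGen S) :=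
  ⟨StmtAux.coneGen_zero_mem S, fun _ hx _ hy => StmtAux.coneGen_add_mem hx hy,
    fun _ ht _ hx => StmtAux.coneGen_smul_mem ht hx⟩

lemma StmtAux.sum_mem_of_cone {C : Set V} (hC : IsConvexConeSet C) {ι : Type*}
    (s : Finset ι) (f : ι → V) (h : ∀ i ∈ s, f i ∈ C) : ∑ i ∈ s, f i ∈ C := by
  classical
  induction s using Finset.induction_on with
  | empty => simpa using hC.1
  | insert _ _ hnot ih =>
    rw [Finset.sum_insert hnot]
    exact hC.2.1 _ (h _ (Finset.mem_insert_self _ _)) _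
      (ih fun i hi => h i (Finset.mem_insert_of_mem hi))

lemma StmtAux.coneGen_mono {S T : Set V} (h : S ⊆ T) : coneGen S ⊆ coneGen T := by
  rintro x ⟨n, c, v, hc, hv, rfl⟩
  exact ⟨n, c, v, hc, fun i => h (hv i), rfl⟩

lemma StmtAux.coneGen_subset {S C : Set V} (hC : IsConvexConeSet C) (h : S ⊆ C) :
    coneGen S ⊆ C := by
  rintro x ⟨n, c, v, hc, hv, rfl⟩
  exact StmtAux.sum_mem_of_cone hC _ _ fun i _ => hC.2.2 _ (hc i) _ (h (hv i))

lemma StmtAux.absorb [DecidableEq V] {T : Finset V} {a : V}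
    (ha : a ∈ coneGen (↑(T.erase a) : Set V)) :
    coneGen (↑T : Set V) ⊆ coneGen (↑(T.erase a) : Set V) := by
  apply StmtAux.coneGen_subset (StmtAux.isConvexConeSet_coneGen _)
  intro b hb
  by_cases hba : b = a
  · exact hba ▸ ha
  · exact StmtAux.mem_coneGen_of_mem (by
      simp only [Finset.coe_erase, Set.mem_diff, Set.mem_singleton_iff]
      exact ⟨hb, hba⟩)

lemma StmtAux.exists_irred [DecidableEq V] (S : Finset V) :
    ∃ T : Finset V, coneGen (↑T : Set V) = coneGen (↑S : Set V) ∧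
      ∀ a ∈ T, a ∉ coneGen (↑(T.erase a) : Set V) := by
  induction S using Finset.strongInduction with
  | _ S ih =>
    by_cases h : ∃ a ∈ S, a ∈ coneGen (↑(S.erase a) : Set V)
    · obtain ⟨a, haS, ha⟩ := h
      obtain ⟨T, hT1, hT2⟩ := ih (S.erase a) (Finset.erase_ssubset haS)
      refine ⟨T, hT1.trans (Set.Subset.antisymm ?_ (StmtAux.absorb ha)), hT2⟩
      exact StmtAux.coneGen_mono (by exact_mod_cast Finset.erase_subset a S)
    · push_neg at h
      exact ⟨S, rfl, h⟩

end StmtAux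

/-- Let σ be a convex polyhedral cone in a finite-dimensional
real vector space N, τ a one-dimensional face of σ, and α ∈ N* a linear
functional negative on τ∖{0} and nonnegative on every one-dimensional face
τ' ≠ τ of σ. If η is a face of σ with η ⊆ ker α, then τ + η is a face of σ. -/
theorem stmt_15 {N : Type} [AddCommGroup N] [Module ℝ N]
    [FiniteDimensional ℝ N]
    (σ τ η : Set N) (hσ : IsPolyhedralCone σ)
    (hτ : IsFaceOf σ τ) (hτdim : coneDim τ = 1)
    (α : N →ₗ[ℝ] ℝ)
    (hneg : ∀ x ∈ τ, x ≠ 0 → α x < 0)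
    (hnonneg : ∀ τ' : Set N, IsFaceOf σ τ' → coneDim τ' = 1 → τ' ≠ τ →
      ∀ x ∈ τ', 0 ≤ α x)
    (hη : IsFaceOf σ η) (hker : ∀ x ∈ η, α x = 0) :
    IsFaceOf σ (τ + η) := by
  classical
  obtain ⟨S₀, hS₀⟩ := hσ
  obtain ⟨T, hTgen, hirr⟩ := StmtAux.exists_irred (V := N) S₀
  have hσT : σ = coneGen (↑T : Set N) := by rw [hS₀, hTgen]
  have hσcone : IsConvexConeSet σ := hσT ▸ StmtAux.isConvexConeSet_coneGen _
  have h0τ : (0 : N) ∈ τ := hτ.1.1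
  have h0η : (0 : N) ∈ η := hη.1.1
  -- pointedness
  have hpt : ∀ x ∈ σ, -x ∈ σ → x = 0 := by
    intro x hx hnx
    have h := hτ.2.2 x hx (-x) hnx (by simpa using h0τ)
    by_contra hne
    have h1 := hneg x h.1 hne
    have h2 := hneg (-x) h.2 (by simpa using hne)
    rw [map_neg] at h2
    linarith
  -- the generator of τ
  have hex : ∃ u₀ ∈ τ, u₀ ≠ (0 : N) := by
    by_contra h
    push_neg at h
    have hsub : τ ⊆ {(0 : N)} := fun x hx => h x hx
    have hle : Submodule.span ℝ τ ≤ ⊥ := by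
      rw [Submodule.span_le]
      intro x hx
      simp [hsub hx]
    have h0 : coneDim τ = 0 := by
      unfold coneDim
      rw [le_bot_iff.mp hle]
      simp
    omega
  obtain ⟨u₀, hu₀τ, hu₀0⟩ := hex
  have hαu₀ : α u₀ < 0 := hneg _ hu₀τ hu₀0
  have hτline : ∀ t ∈ τ, ∃ c : ℝ, t = c • u₀ := by
    intro t ht
    have h1 : Submodule.span ℝ ({u₀} : Set N) ≤ Submodule.span ℝ τ :=
      Submodule.span_mono (Set.singleton_subset_iff.mpr hu₀τ)
    have h2 : Submodule.span ℝ ({u₀} : Set N) = Submodule.span ℝ τ := by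
      apply Submodule.eq_of_le_of_finrank_le h1
      rw [finrank_span_singleton hu₀0]
      exact le_of_eq hτdim
    have ht' : t ∈ Submodule.span ℝ ({u₀} : Set N) := h2 ▸ Submodule.subset_span ht
    obtain ⟨c, hc⟩ := Submodule.mem_span_singleton.mp ht'
    exact ⟨c, hc.symm⟩
  -- each irredundant generator spans a face
  have rayface : ∀ a ∈ T, IsFaceOf σ {x | ∃ r : ℝ, 0 ≤ r ∧ x = r • a} := by
    intro a haT
    have haσ : a ∈ σ := hσT ▸ StmtAux.mem_coneGen_of_mem (by exact_mod_cast haT)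
    refine ⟨⟨⟨0, le_refl 0, (zero_smul ℝ a).symm⟩, ?_, ?_⟩, ?_, ?_⟩
    · rintro x ⟨r, hr, rfl⟩ y ⟨s, hs, rfl⟩
      exact ⟨r + s, by linarith, (add_smul r s a).symm⟩
    · rintro t ht x ⟨r, hr, rfl⟩
      exact ⟨t * r, mul_nonneg ht hr, (mul_smul t r a).symm⟩
    · rintro x ⟨r, hr, rfl⟩
      exact hσcone.2.2 r hr a haσ
    · rintro x hxσ y hyσ ⟨lam, hlam, hxy⟩
      rw [hσT] at hxσ hyσ
      obtain ⟨n, c, v, hc, hv, hxeq⟩ := hxσ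
      obtain ⟨m, d, w, hd, hw, hyeq⟩ := hyσ
      set sx : ℝ := ∑ i ∈ Finset.univ.filter (fun i => v i = a), c i with hsx
      set sy : ℝ := ∑ i ∈ Finset.univ.filter (fun i => w i = a), d i with hsy
      set xr : N := ∑ i ∈ Finset.univ.filter (fun i => ¬ v i = a), c i • v i with hxr
      set yr : N := ∑ i ∈ Finset.univ.filter (fun i => ¬ w i = a), d i • w i with hyr
      have hxdec : x = sx • a + xr := by
        rw [hxeq, ← Finset.sum_filter_add_sum_filter_not Finset.univ (fun i => v i = a)]
        congr 1
        rw [hsx, Finset.sum_smul]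
        apply Finset.sum_congr rfl
        intro i hi
        rw [(Finset.mem_filter.mp hi).2]
      have hydec : y = sy • a + yr := by
        rw [hyeq, ← Finset.sum_filter_add_sum_filter_not Finset.univ (fun i => w i = a)]
        congr 1
        rw [hsy, Finset.sum_smul]
        apply Finset.sum_congr rfl
        intro i hi
        rw [(Finset.mem_filter.mp hi).2]
      have hsx0 : 0 ≤ sx := Finset.sum_nonneg fun i _ => hc i
      have hsy0 : 0 ≤ sy := Finset.sum_nonneg fun i _ => hd i
      have hC := StmtAux.isConvexConeSet_coneGen (↑(T.erase a) : Set N)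
      have hxrE : xr ∈ coneGen (↑(T.erase a) : Set N) := by
        apply StmtAux.sum_mem_of_cone hC
        intro i hi
        refine hC.2.2 _ (hc i) _ (StmtAux.mem_coneGen_of_mem ?_)
        have := (Finset.mem_filter.mp hi).2
        simp only [Finset.coe_erase, Set.mem_diff, Set.mem_singleton_iff]
        exact ⟨hv i, this⟩
      have hyrE : yr ∈ coneGen (↑(T.erase a) : Set N) := by
        apply StmtAux.sum_mem_of_cone hC
        intro i hi
        refine hC.2.2 _ (hd i) _ (StmtAux.mem_coneGen_of_mem ?_)
        have := (Finset.mem_filter.mp hi).2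
        simp only [Finset.coe_erase, Set.mem_diff, Set.mem_singleton_iff]
        exact ⟨hw i, this⟩
      have hzE : xr + yr ∈ coneGen (↑(T.erase a) : Set N) := hC.2.1 _ hxrE _ hyrE
      have hz : xr + yr = (lam - (sx + sy)) • a := by
        have h1 : (sx + sy) • a + (xr + yr) = lam • a := by
          rw [add_smul]
          rw [hxdec, hydec] at hxy
          calc sx • a + sy • a + (xr + yr)
              = sx • a + xr + (sy • a + yr) := by abel
            _ = lam • a := hxy
        rw [sub_smul, ← h1]
        abel
      rcases lt_or_ge (sx + sy) lam with hlt | hle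
      · exfalso
        apply hirr a haT
        have hne : lam - (sx + sy) ≠ 0 := by linarith
        have : (lam - (sx + sy))⁻¹ • (xr + yr) = a := by
          rw [hz, smul_smul, inv_mul_cancel₀ hne, one_smul]
        have h2 := hC.2.2 ((lam - (sx + sy))⁻¹) (inv_nonneg.mpr (by linarith)) _ hzE
        rwa [this] at h2
      · have hzσ : xr + yr ∈ σ := by
          rw [hσT]
          exact StmtAux.coneGen_mono (by exact_mod_cast Finset.erase_subset a T) hzE
        have hnegσ : -(xr + yr) ∈ σ := by
          have : -(xr + yr) = (sx + sy - lam) • a := by rw [hz]; rw [← neg_smul]; ring_nf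
          rw [this]
          exact hσcone.2.2 _ (by linarith) _ haσ
        have hz0 : xr + yr = 0 := hpt _ hzσ hnegσ
        have hxrσ : xr ∈ σ := by
          rw [hσT]
          exact StmtAux.coneGen_mono (by exact_mod_cast Finset.erase_subset a T) hxrE
        have hyrσ : yr ∈ σ := by
          rw [hσT]
          exact StmtAux.coneGen_mono (by exact_mod_cast Finset.erase_subset a T) hyrE
        have hxr0 : xr = 0 := hpt _ hxrσ (by rw [show -xr = yr by
          have := hz0; linear_combination (norm := abel) -this]; exact hyrσ)
        have hyr0 : yr = 0 := by
          have := hz0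
          rw [hxr0, zero_add] at this
          exact this
        constructor
        · exact ⟨sx, hsx0, by rw [hxdec, hxr0, add_zero]⟩
        · exact ⟨sy, hsy0, by rw [hydec, hyr0, add_zero]⟩
  -- sign dichotomy for generators
  have hsplit : ∀ a ∈ T, a ∈ τ ∨ 0 ≤ α a := by
    intro a haT
    set R : Set N := {x | ∃ r : ℝ, 0 ≤ r ∧ x = r • a} with hR
    have hRface := rayface a haT
    have haR : a ∈ R := ⟨1, zero_le_one, (one_smul ℝ a).symm⟩
    have ha0 : a ≠ 0 := by
      intro h
      exact hirr a haT (h ▸ StmtAux.coneGen_zero_mem _)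
    have hdim : coneDim R = 1 := by
      have hspan : Submodule.span ℝ R = Submodule.span ℝ ({a} : Set N) := by
        apply le_antisymm
        · rw [Submodule.span_le]
          rintro x ⟨r, hr, rfl⟩
          exact Submodule.mem_span_singleton.mpr ⟨r, rfl⟩
        · exact Submodule.span_mono (Set.singleton_subset_iff.mpr haR)
      unfold coneDim
      rw [hspan]
      exact finrank_span_singleton ha0
    by_cases hRτ : R = τ
    · left; rw [← hRτ]; exact haR
    · right; exact hnonneg R hRface hdim hRτ a haR
  -- decomposition of σ-elements
  have decomp : ∀ x ∈ σ, ∃ p q : N, x = p + q ∧ p ∈ τ ∧ q ∈ σ ∧ 0 ≤ α q := by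
    intro x hx
    rw [hσT] at hx
    obtain ⟨n, c, v, hc, hv, rfl⟩ := hx
    refine ⟨∑ i ∈ Finset.univ.filter (fun i => v i ∈ τ), c i • v i,
      ∑ i ∈ Finset.univ.filter (fun i => ¬ v i ∈ τ), c i • v i,
      (Finset.sum_filter_add_sum_filter_not Finset.univ _ _).symm, ?_, ?_, ?_⟩
    · apply StmtAux.sum_mem_of_cone hτ.1
      intro i hi
      exact hτ.1.2.2 _ (hc i) _ (Finset.mem_filter.mp hi).2
    · apply StmtAux.sum_mem_of_cone hσcone
      intro i _
      refine hσcone.2.2 _ (hc i) _ ?_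
      rw [hσT]
      exact StmtAux.mem_coneGen_of_mem (by exact_mod_cast hv i)
    · rw [map_sum]
      apply Finset.sum_nonneg
      intro i hi
      rw [map_smul, smul_eq_mul]
      refine mul_nonneg (hc i) ?_
      rcases hsplit (v i) (hv i) with h | h
      · exact absurd h (Finset.mem_filter.mp hi).2
      · exact h
  -- final face proof
  refine ⟨⟨?_, ?_, ?_⟩, ?_, ?_⟩
  · exact Set.mem_add.mpr ⟨0, h0τ, 0, h0η, by simp⟩
  · intro x hx y hy
    rw [Set.mem_add] at hx hy ⊢
    obtain ⟨x1, hx1, x2, hx2, rfl⟩ := hx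
    obtain ⟨y1, hy1, y2, hy2, rfl⟩ := hy
    exact ⟨x1 + y1, hτ.1.2.1 _ hx1 _ hy1, x2 + y2, hη.1.2.1 _ hx2 _ hy2, by abel⟩
  · intro t ht x hx
    rw [Set.mem_add] at hx ⊢
    obtain ⟨x1, hx1, x2, hx2, rfl⟩ := hx
    exact ⟨t • x1, hτ.1.2.2 t ht _ hx1, t • x2, hη.1.2.2 t ht _ hx2, (smul_add t x1 x2).symm⟩
  · intro x hx
    rw [Set.mem_add] at hx
    obtain ⟨x1, hx1, x2, hx2, rfl⟩ := hx
    exact hσcone.2.1 _ (hτ.2.1 hx1) _ (hη.2.1 hx2)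
  · intro x hx y hy hxy
    rw [Set.mem_add] at hxy
    obtain ⟨t, ht, e, he, hte⟩ := hxy
    obtain ⟨xp, xq, hxdec, hxpτ, hxqσ, hxqα⟩ := decomp x hx
    obtain ⟨yp, yq, hydec, hypτ, hyqσ, hyqα⟩ := decomp y hy
    have hpτ : xp + yp ∈ τ := hτ.1.2.1 _ hxpτ _ hypτ
    have hqσ : xq + yq ∈ σ := hσcone.2.1 _ hxqσ _ hyqσ
    have hqα : 0 ≤ α (xq + yq) := by rw [map_add]; linarith
    obtain ⟨t', ht'⟩ := hτline t ht
    obtain ⟨p', hp'⟩ := hτline _ hpτ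
    have hpq : (xp + yp) + (xq + yq) = t + e := by
      rw [hxdec, hydec] at hte
      rw [hte]; abel
    have hqe : xq + yq = (t' - p') • u₀ + e := by
      have h2 : xq + yq = t + e - (xp + yp) := by
        rw [← hpq]; abel
      rw [h2, ht', hp', sub_smul]
      abel
    have hαq : α (xq + yq) = (t' - p') * α u₀ := by
      rw [hqe, map_add, map_smul, smul_eq_mul, hker e he, add_zero]
    have hδ0 : t' - p' ≤ 0 := by nlinarith
    rcases eq_or_lt_of_le hδ0 with heq | hlt
    · have hq_eq : xq + yq = e := by
        rw [hqe, heq, zero_smul, zero_add]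
      have hqη := hη.2.2 xq hxqσ yq hyqσ (hq_eq ▸ he)
      constructor
      · rw [Set.mem_add]
        exact ⟨xp, hxpτ, xq, hqη.1, by rw [hxdec]⟩
      · rw [Set.mem_add]
        exact ⟨yp, hypτ, yq, hqη.2, by rw [hydec]⟩
    · exfalso
      have hm : (p' - t') • u₀ ∈ τ := hτ.1.2.2 _ (by linarith) _ hu₀τ
      have hmσ : (p' - t') • u₀ ∈ σ := hτ.2.1 hm
      have he_eq : e = (p' - t') • u₀ + (xq + yq) := by
        rw [hqe, ← add_assoc, ← add_smul,
          show p' - t' + (t' - p') = 0 by ring, zero_smul, zero_add]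
      have hmη : (p' - t') • u₀ ∈ η :=
        (hη.2.2 _ hmσ _ hqσ (he_eq ▸ he)).1
      have h0 : α ((p' - t') • u₀) = 0 := hker _ hmη
      rw [map_smul, smul_eq_mul] at h0
      nlinarith
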